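/- Let M be a martingale that does not bet at any even position, i.e., M(x0) = M(x1) for every string x of even length. Let B : ℕ → Bool be any sequence and define Z : ℕ → Bool recursively by Z(2n) = B(n) and Z(2n+1) = 1 if M((Z↾(2n+1))1) < M((Z↾(2n+1))0), and Z(2n+1) = 0 otherwise. Then M(Z↾n) ≤ M(ε) for every n, where ε is the empty string; in particular, M does not succeed on Z. -/

import Mathlib

open Filter

/-- The finite bit string consisting of the first `n` bits of the sequence `Z`. -/
def seqTake (Z : ℕ → Bool) (n : ℕ) : List Bool :=
  List.ofFn fun i : Fin n => Z i

/-- A martingale is a positive rational-valued function on bit strings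
satisfying the fairness condition `M x = (M x0 + M x1)/2`. -/
def IsMartingale (M : List Bool → ℚ) : Prop :=
  ∀ x : List Bool, 0 < M x ∧ M x = (M (x ++ [false]) + M (x ++ [true])) / 2

/-- `M` succeeds on `Z` if `limsup_n M (Z↾n) = ∞`. -/
def Succeeds (M : List Bool → ℚ) (Z : ℕ → Bool) : Prop :=
  ∀ c : ℚ, ∃ᶠ n in atTop, c < M (seqTake Z n)

/-- `Z` is computably random if no computable martingale succeeds on it. -/
def ComputablyRandom (Z : ℕ → Bool) : Prop :=
  ∀ M : List Bool → ℚ, Computable M → IsMartingale M → ¬ Succeeds M Z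

/-- The martingale `M` does not bet at position `n`:
`M (x0) = M (x1)` for every string `x` of length `n`. -/
def NoBetAt (M : List Bool → ℚ) (n : ℕ) : Prop :=
  ∀ x : List Bool, x.length = n → M (x ++ [false]) = M (x ++ [true])

lemma seqTake_succ (Z : ℕ → Bool) (n : ℕ) :
    seqTake Z (n + 1) = seqTake Z n ++ [Z n] := by
  simp only [seqTake, List.ofFn_succ', List.concat_eq_append]
  rfl

lemma seqTake_length (Z : ℕ → Bool) (n : ℕ) : (seqTake Z n).length = n := by
  simp [seqTake]

/-- If `M` bets only at odd positions, and `Z` copies an arbitrary sequence `B` at even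
positions while diagonalising against `M` at odd positions, then the capital of `M`
along `Z` never exceeds `M ε`; in particular `M` does not succeed on `Z`. -/
theorem diagonalize_odd_bets (M : List Bool → ℚ) (hM : IsMartingale M)
    (hnb : ∀ n : ℕ, Even n → NoBetAt M n)
    (B : ℕ → Bool) (Z : ℕ → Bool)
    (hZeven : ∀ n : ℕ, Z (2 * n) = B n)
    (hZodd : ∀ n : ℕ, Z (2 * n + 1) =
      if M (seqTake Z (2 * n + 1) ++ [true]) < M (seqTake Z (2 * n + 1) ++ [false])
      then true else false) :
    (∀ m : ℕ, M (seqTake Z m) ≤ M []) ∧ ¬ Succeeds M Z := by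
  have key : ∀ m : ℕ, M (seqTake Z m) ≤ M [] := by
    intro m
    induction m with
    | zero => simp [seqTake]
    | succ m ih =>
      rw [seqTake_succ]
      rcases Nat.even_or_odd m with he | ho
      · -- no bet at even position m
        have hnbm := hnb m he (seqTake Z m) (seqTake_length Z m)
        have hfair := (hM (seqTake Z m)).2
        have : M (seqTake Z m ++ [Z m]) = M (seqTake Z m) := by
          cases Z m <;> simp_all <;> linarith
        rw [this]; exact ih
      · -- odd position: Z m minimises
        obtain ⟨n, rfl⟩ := ho
        set x := seqTake Z (2 * n + 1) with hx
        have hfair := (hM x).2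
        have hz := hZodd n
        have hle : M (x ++ [Z (2 * n + 1)]) ≤ M x := by
          rw [hz]
          by_cases h : M (x ++ [true]) < M (x ++ [false])
          · rw [if_pos h]; linarith
          · rw [if_neg h]; push_neg at h; linarith
        calc M (x ++ [Z (2 * n + 1)]) ≤ M x := hle
          _ ≤ M [] := ih
  refine ⟨key, fun hs => ?_⟩
  have := (hs (M [])).forall_exists_of_atTop 0
  obtain ⟨n, _, hn⟩ := this
  exact absurd (key n) (not_le.mpr hn)
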